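/- Let n be an odd positive integer. Then the limit A_n = lim_{k→∞} ∫₀^π |cosⁿ x − cosⁿ(kx)| dx (k ranging over the positive integers) exists and equals (8/π) · (n!/(n!!)²) · Σ_{j=0}^{(n−1)/2} ((2j−1)!!/(2j)!!) · (1/(2j+1)). -/

import Mathlib

open Real Filter MeasureTheory Topology intervalIntegral


noncomputable def Jint (m : ℕ) : ℝ := ∫ x in (0:ℝ)..π, x * Real.cos x ^ (2*m+1)

lemma J_zero : Jint 0 = -2 := by
  have h : ∀ x ∈ Set.uIcc (0:ℝ) π, HasDerivAt (fun x => x * Real.sin x + Real.cos x)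
      (x * Real.cos x ^ (2*0+1)) x := by
    intro x _
    have := ((hasDerivAt_id x).mul (Real.hasDerivAt_sin x)).add (Real.hasDerivAt_cos x)
    exact this.congr_deriv (by simp only [id_eq]; ring_nf)
  rw [Jint, integral_eq_sub_of_hasDerivAt h
    ((continuous_id.mul (Real.continuous_cos.pow _)).intervalIntegrable _ _)]
  norm_num

lemma J_rec (m : ℕ) : Jint (m+1) = -2/(2*(m:ℝ)+3)^2 + (2*(m:ℝ)+2)/(2*(m:ℝ)+3) * Jint m := by
  set n : ℕ := 2*m+1 with hn
  have hn2 : ((n:ℝ)+2) ≠ 0 := by positivity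
  have h : ∀ x ∈ Set.uIcc (0:ℝ) π, HasDerivAt
      (fun x => (x * Real.cos x^(n+1) * Real.sin x)/((n:ℝ)+2) + Real.cos x^(n+2)/((n:ℝ)+2)^2)
      (x * Real.cos x ^ (n+2) - ((n:ℝ)+1)/((n:ℝ)+2) * (x * Real.cos x ^ n)) x := by
    intro x _
    have h1 : HasDerivAt (fun x => x * Real.cos x^(n+1) * Real.sin x)
        ((Real.cos x^(n+1) + x * (((n:ℝ)+1) * Real.cos x ^ n * (-Real.sin x))) * Real.sin x
          + x * Real.cos x^(n+1) * Real.cos x) x := by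
      have := (((hasDerivAt_id x).mul ((Real.hasDerivAt_cos x).pow (n+1))).mul
        (Real.hasDerivAt_sin x))
      exact this.congr_deriv (by simp only [id_eq, Pi.mul_apply, Pi.pow_apply]; push_cast; ring)
    have h2 : HasDerivAt (fun x => Real.cos x^(n+2)) (((n:ℝ)+2) * Real.cos x ^ (n+1) * (-Real.sin x)) x := by
      have := (Real.hasDerivAt_cos x).pow (n+2)
      exact this.congr_deriv (by push_cast; ring)
    have := (h1.div_const (((n:ℝ)+2))).add (h2.div_const (((n:ℝ)+2)^2))
    refine this.congr_deriv ?_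
    have hs : Real.sin x ^ 2 = 1 - Real.cos x ^ 2 := Real.sin_sq x
    field_simp
    ring_nf
    simp only [hs]
    ring
  have hi1 : IntervalIntegrable (fun x => x * Real.cos x ^ (n+2)) volume 0 π :=
    (continuous_id.mul (Real.continuous_cos.pow _)).intervalIntegrable _ _
  have hi2 : IntervalIntegrable (fun x => ((n:ℝ)+1)/((n:ℝ)+2) * (x * Real.cos x ^ n)) volume 0 π :=
    ((continuous_const.mul (continuous_id.mul (Real.continuous_cos.pow _)))).intervalIntegrable _ _
  have key := integral_eq_sub_of_hasDerivAt h (hi1.sub hi2)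
  rw [intervalIntegral.integral_sub hi1 hi2, intervalIntegral.integral_const_mul] at key
  have e1 : (∫ x in (0:ℝ)..π, x * Real.cos x ^ (n+2)) = Jint (m+1) := by
    rw [Jint, show 2*(m+1)+1 = n+2 from by omega]
  have e2 : (∫ x in (0:ℝ)..π, x * Real.cos x ^ n) = Jint m := rfl
  rw [e1, e2] at key
  have hodd : Real.cos π ^ (n+2) = -1 := by
    rw [Real.cos_pi, hn]; rw [show 2*m+1+2 = 2*(m+1)+1 from by omega]
    simp [pow_succ, pow_mul]
  rw [Real.sin_pi, Real.sin_zero, Real.cos_zero, hodd] at key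
  have hn' : (n:ℝ) = 2*(m:ℝ)+1 := by rw [hn]; push_cast; ring
  rw [hn'] at key
  linear_combination key

noncomputable def Tsum (m : ℕ) : ℝ :=
  ((2*m+1).factorial : ℝ)/((2*m+1).doubleFactorial:ℝ)^2 *
    ∑ j ∈ Finset.range (m+1),
      (Nat.doubleFactorial (2*j-1) : ℝ)/(Nat.doubleFactorial (2*j) : ℝ) * (1/(2*(j:ℝ)+1))

lemma T_zero : Tsum 0 = 1 := by
  simp [Tsum, Nat.doubleFactorial, Nat.factorial]

lemma T_rec (m : ℕ) : Tsum (m+1) = 1/(2*(m:ℝ)+3)^2 + (2*(m:ℝ)+2)/(2*(m:ℝ)+3) * Tsum m := by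
  have hFDE : ((2*m+1).factorial : ℝ) = ((2*m+1).doubleFactorial:ℝ) * ((2*m).doubleFactorial:ℝ) := by
    exact_mod_cast congrArg (Nat.cast (R:=ℝ)) (Nat.factorial_eq_mul_doubleFactorial (2*m))
  have hF : ((2*(m+1)+1).factorial : ℝ)
      = (2*(m:ℝ)+3) * (2*(m:ℝ)+2) * ((2*m+1).factorial : ℝ) := by
    rw [show 2*(m+1)+1 = (2*m+1)+1+1 from by ring]
    rw [Nat.factorial_succ, Nat.factorial_succ]
    push_cast; ring
  have hD : ((2*(m+1)+1).doubleFactorial : ℝ) = (2*(m:ℝ)+3) * ((2*m+1).doubleFactorial:ℝ) := by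
    rw [show 2*(m+1)+1 = (2*m+1)+2 from by ring, Nat.doubleFactorial_add_two]
    push_cast; ring
  have hE : ((2*(m+1)).doubleFactorial : ℝ) = (2*(m:ℝ)+2) * ((2*m).doubleFactorial:ℝ) := by
    rw [show 2*(m+1) = (2*m)+2 from by ring, Nat.doubleFactorial_add_two]
    push_cast; ring
  have hDm : ((2*(m+1)-1).doubleFactorial : ℝ) = ((2*m+1).doubleFactorial:ℝ) := by
    rw [show 2*(m+1)-1 = 2*m+1 from by omega]
  have hD0 : ((2*m+1).doubleFactorial:ℝ) ≠ 0 := by positivity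
  have hE0 : ((2*m).doubleFactorial:ℝ) ≠ 0 := by positivity
  have h3 : (2*(m:ℝ)+3) ≠ 0 := by positivity
  have h2 : (2*(m:ℝ)+2) ≠ 0 := by positivity
  have h1 : (2*((m:ℝ)+1)+1) ≠ 0 := by positivity
  rw [Tsum, Tsum, Finset.sum_range_succ, hF, hD, hE, hDm, hFDE]
  push_cast
  field_simp
  ring

lemma abs_pow_sub_pow (n : ℕ) (a b : ℝ) (ha : |a| ≤ 1) (hb : |b| ≤ 1) :
    |a ^ n - b ^ n| ≤ n * |a - b| := by
  induction n with
  | zero => simp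
  | succ m ih =>
    have h1 : a ^ (m+1) - b ^ (m+1) = a * (a ^ m - b ^ m) + b ^ m * (a - b) := by ring
    have h2 : |b ^ m| ≤ 1 := by rw [abs_pow]; exact pow_le_one₀ (abs_nonneg b) hb
    have h3 : |a ^ (m+1) - b ^ (m+1)| ≤ |a| * |a ^ m - b ^ m| + |b ^ m| * |a - b| := by
      rw [h1]; exact (abs_add_le _ _).trans (by rw [abs_mul, abs_mul])
    have t1 : |a| * |a ^ m - b ^ m| ≤ (m : ℝ) * |a - b| :=
      le_trans (mul_le_of_le_one_left (abs_nonneg _) ha) ih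
    have t2 : |b ^ m| * |a - b| ≤ |a - b| := mul_le_of_le_one_left (abs_nonneg _) h2
    push_cast
    linarith

lemma abs_cos_sub_cos_le (x y : ℝ) : |Real.cos x - Real.cos y| ≤ |x - y| := by
  rw [Real.cos_sub_cos]
  have e : |(-2) * Real.sin ((x+y)/2) * Real.sin ((x-y)/2)|
      = 2 * (|Real.sin ((x+y)/2)| * |Real.sin ((x-y)/2)|) := by
    rw [abs_mul, abs_mul]; norm_num; ring
  rw [e]
  have h1 : |Real.sin ((x+y)/2)| ≤ 1 := Real.abs_sin_le_one _
  have h2 : |Real.sin ((x-y)/2)| ≤ |x-y|/2 := by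
    have := Real.abs_sin_le_abs (x := (x-y)/2)
    rwa [abs_div, abs_two] at this
  nlinarith [abs_nonneg (Real.sin ((x-y)/2)), abs_nonneg (x-y), abs_nonneg (Real.sin ((x+y)/2))]

lemma cosn_lip (n : ℕ) (x x' : ℝ) :
    |Real.cos x ^ n - Real.cos x' ^ n| ≤ n * |x - x'| :=
  le_trans (abs_pow_sub_pow n _ _ (Real.abs_cos_le_one x) (Real.abs_cos_le_one x'))
    (mul_le_mul_of_nonneg_left (_root_.abs_cos_sub_cos_le x x') (Nat.cast_nonneg n))

lemma F_lip (n : ℕ) (x x' y : ℝ) :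
    abs (|Real.cos x ^ n - Real.cos y ^ n| - |Real.cos x' ^ n - Real.cos y ^ n|) ≤ n * |x - x'| := by
  have h := abs_abs_sub_abs_le_abs_sub (Real.cos x ^ n - Real.cos y ^ n)
    (Real.cos x' ^ n - Real.cos y ^ n)
  have e : (Real.cos x ^ n - Real.cos y ^ n) - (Real.cos x' ^ n - Real.cos y ^ n)
      = Real.cos x ^ n - Real.cos x' ^ n := by ring
  rw [e] at h
  exact h.trans (cosn_lip n x x')

lemma F_bd (n : ℕ) (x y : ℝ) : |Real.cos x ^ n - Real.cos y ^ n| ≤ 2 := by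
  have h1 : |Real.cos x ^ n| ≤ 1 := by
    rw [abs_pow]; exact pow_le_one₀ (abs_nonneg _) (Real.abs_cos_le_one x)
  have h2 : |Real.cos y ^ n| ≤ 1 := by
    rw [abs_pow]; exact pow_le_one₀ (abs_nonneg _) (Real.abs_cos_le_one y)
  have := abs_sub (Real.cos x ^ n) (Real.cos y ^ n)
  linarith

noncomputable def gfun (n : ℕ) (x : ℝ) : ℝ :=
  π⁻¹ * ∫ y in (0:ℝ)..π, |Real.cos x ^ n - Real.cos y ^ n|

lemma integrable_absdiff (n : ℕ) (c : ℝ) (a b : ℝ) :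
    IntervalIntegrable (fun y => |c - Real.cos y ^ n|) volume a b :=
  ((continuous_const.sub (Real.continuous_cos.pow n)).abs).intervalIntegrable _ _

lemma g_lip (n : ℕ) (x x' : ℝ) : |gfun n x - gfun n x'| ≤ n * |x - x'| := by
  have hπ : (0:ℝ) < π := Real.pi_pos
  rw [gfun, gfun, ← mul_sub,
    ← intervalIntegral.integral_sub (integrable_absdiff n _ _ _) (integrable_absdiff n _ _ _),
    abs_mul, abs_inv, abs_of_pos hπ]
  have hb : ∀ y ∈ Set.uIoc (0:ℝ) π,
      ‖|Real.cos x ^ n - Real.cos y ^ n| - |Real.cos x' ^ n - Real.cos y ^ n|‖ ≤ n * |x - x'| :=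
    fun y _ => F_lip n x x' y
  have key := intervalIntegral.norm_integral_le_of_norm_le_const hb
  rw [Real.norm_eq_abs, sub_zero, abs_of_pos hπ] at key
  refine le_trans (mul_le_mul_of_nonneg_left key (inv_nonneg.2 hπ.le)) (le_of_eq ?_)
  field_simp

lemma g_cont (n : ℕ) : Continuous (gfun n) := by
  refine LipschitzWith.continuous (K := n) (LipschitzWith.of_dist_le_mul fun x y => ?_)
  rw [Real.dist_eq, Real.dist_eq]
  simpa using g_lip n x y

lemma g_bd (n : ℕ) (x : ℝ) : |gfun n x| ≤ 2 := by
  have hπ : (0:ℝ) < π := Real.pi_pos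
  rw [gfun, abs_mul, abs_inv, abs_of_pos hπ]
  have hb : ∀ y ∈ Set.uIoc (0:ℝ) π, ‖|Real.cos x ^ n - Real.cos y ^ n|‖ ≤ 2 := by
    intro y _; rw [Real.norm_eq_abs, abs_abs]; exact F_bd n x y
  have key := intervalIntegral.norm_integral_le_of_norm_le_const hb
  rw [Real.norm_eq_abs, sub_zero, abs_of_pos hπ] at key
  refine le_trans (mul_le_mul_of_nonneg_left key (inv_nonneg.2 hπ.le)) (le_of_eq ?_)
  field_simp
open Real Filter MeasureTheory Topology intervalIntegral

lemma F_periodic (n : ℕ) (c : ℝ) : Function.Periodic (fun y => |c - Real.cos y ^ n|) (2*π) := by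
  intro y; simp [Real.cos_periodic y]

lemma integral_refl (n : ℕ) (c : ℝ) :
    (∫ y in π..(2*π), |c - Real.cos y ^ n|) = ∫ y in (0:ℝ)..π, |c - Real.cos y ^ n| := by
  have h := intervalIntegral.integral_comp_sub_left (a := (0:ℝ)) (b := π)
    (fun y => |c - Real.cos y ^ n|) (2*π)
  have e : ∀ y : ℝ, |c - Real.cos (2*π - y) ^ n| = |c - Real.cos y ^ n| := by
    intro y; rw [Real.cos_two_pi_sub]
  simp only [e] at h
  rw [show 2*π - π = π from by ring, sub_zero] at h
  exact h.symm

lemma integral_shift (n : ℕ) (x t : ℝ) :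
    (∫ y in t..(t+2*π), |Real.cos x ^ n - Real.cos y ^ n|) = 2*π * gfun n x := by
  rw [(F_periodic n _).intervalIntegral_add_eq t 0, zero_add]
  have hsplit := intervalIntegral.integral_add_adjacent_intervals
    (integrable_absdiff n (Real.cos x ^ n) 0 π) (integrable_absdiff n (Real.cos x ^ n) π (2*π))
  rw [← hsplit, integral_refl, gfun]
  have : π ≠ 0 := ne_of_gt Real.pi_pos
  field_simp
  ring

lemma pair_bound (n k : ℕ) (hk : 1 ≤ k) (a : ℝ) :
    |∫ x in a..(a + 2*π/k), (|Real.cos x ^ n - Real.cos ((k:ℝ)*x) ^ n| - gfun n x)| ≤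
      8*π^2*n/k^2 := by
  have hπ := Real.pi_pos
  have hk0 : (0:ℝ) < k := by exact_mod_cast hk
  set h : ℝ := 2*π/k with hh
  have hhpos : 0 < h := by positivity
  have hle : a ≤ a + h := by linarith
  have cF : Continuous fun x : ℝ => Real.cos ((k:ℝ)*x) ^ n :=
    (Real.continuous_cos.comp (continuous_const.mul continuous_id)).pow n
  have i1 : IntervalIntegrable (fun x => |Real.cos x ^ n - Real.cos ((k:ℝ)*x) ^ n|
      - |Real.cos a ^ n - Real.cos ((k:ℝ)*x) ^ n|) volume a (a+h) :=
    (((Real.continuous_cos.pow n).sub cF).abs.sub ((continuous_const.sub cF).abs)).intervalIntegrable _ _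
  have i2 : IntervalIntegrable (fun x => |Real.cos a ^ n - Real.cos ((k:ℝ)*x) ^ n|) volume a (a+h) :=
    ((continuous_const.sub cF).abs).intervalIntegrable _ _
  have i3 : IntervalIntegrable (fun x => gfun n a - gfun n x) volume a (a+h) :=
    (continuous_const.sub (g_cont n)).intervalIntegrable _ _
  have mid : (∫ x in a..(a+h), |Real.cos a ^ n - Real.cos ((k:ℝ)*x) ^ n|) = h * gfun n a := by
    have hsub := intervalIntegral.integral_comp_mul_left
      (f := fun y => |Real.cos a ^ n - Real.cos y ^ n|) (a := a) (b := a+h) (ne_of_gt hk0)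
    have e2 : (k:ℝ)*(a+h) = (k:ℝ)*a + 2*π := by
      rw [hh]; field_simp
    rw [e2] at hsub
    rw [hsub, integral_shift, smul_eq_mul, hh]
    field_simp
  have e : (fun x => |Real.cos x ^ n - Real.cos ((k:ℝ)*x) ^ n| - gfun n x)
      = fun x => ((|Real.cos x ^ n - Real.cos ((k:ℝ)*x) ^ n|
          - |Real.cos a ^ n - Real.cos ((k:ℝ)*x) ^ n|) + (gfun n a - gfun n x))
        + (|Real.cos a ^ n - Real.cos ((k:ℝ)*x) ^ n| - gfun n a) := by
    funext x; ring
  rw [e, intervalIntegral.integral_add ((i1.add i3)) (i2.sub (intervalIntegrable_const)),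
    intervalIntegral.integral_add i1 i3,
    intervalIntegral.integral_sub i2 intervalIntegrable_const,
    intervalIntegral.integral_const, mid, add_sub_cancel_left, smul_eq_mul, sub_self, add_zero]
  have b1 : ‖∫ x in a..(a+h), (|Real.cos x ^ n - Real.cos ((k:ℝ)*x) ^ n|
      - |Real.cos a ^ n - Real.cos ((k:ℝ)*x) ^ n|)‖ ≤ (n*h) * |a+h-a| := by
    refine intervalIntegral.norm_integral_le_of_norm_le_const fun x hx => ?_
    rw [Set.uIoc_of_le hle] at hx
    have hxa : |x - a| ≤ h := by
      rw [abs_of_pos (by linarith [hx.1])]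
      linarith [hx.2]
    refine le_trans ?_ (by gcongr : (n:ℝ) * |x - a| ≤ n * h)
    exact F_lip n x a ((k:ℝ)*x)
  have b3 : ‖∫ x in a..(a+h), (gfun n a - gfun n x)‖ ≤ (n*h) * |a+h-a| := by
    refine intervalIntegral.norm_integral_le_of_norm_le_const fun x hx => ?_
    rw [Set.uIoc_of_le hle] at hx
    have hxa : |a - x| ≤ h := by
      rw [abs_sub_comm, abs_of_pos (by linarith [hx.1])]
      linarith [hx.2]
    refine le_trans ?_ (by gcongr : (n:ℝ) * |a - x| ≤ n * h)
    exact g_lip n a x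
  rw [Real.norm_eq_abs] at b1 b3
  have habs : |a + h - a| = h := by rw [add_sub_cancel_left, abs_of_pos hhpos]
  rw [habs] at b1 b3
  have := (abs_add_le (∫ x in a..(a+h), (|Real.cos x ^ n - Real.cos ((k:ℝ)*x) ^ n|
      - |Real.cos a ^ n - Real.cos ((k:ℝ)*x) ^ n|)) (∫ x in a..(a+h), (gfun n a - gfun n x)))
  have hfin : (n*h)*h + (n*h)*h = 8*π^2*n/k^2 := by
    rw [hh]; field_simp; ring
  linarith

lemma main_bound (n k : ℕ) (hk : 1 ≤ k) :
    |∫ x in (0:ℝ)..π, (|Real.cos x ^ n - Real.cos ((k:ℝ)*x) ^ n| - gfun n x)| ≤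
      (4*π^2*n + 4*π)/k := by
  have hπ := Real.pi_pos
  have hk0 : (0:ℝ) < k := by exact_mod_cast hk
  set m : ℕ := k/2 with hm
  set ai : ℕ → ℝ := fun i => 2*π*i/k with hai
  have hstep : ∀ i : ℕ, ai (i+1) = ai i + 2*π/k := by
    intro i; rw [hai]; push_cast; field_simp
  have cF : Continuous fun x : ℝ => Real.cos ((k:ℝ)*x) ^ n :=
    (Real.continuous_cos.comp (continuous_const.mul continuous_id)).pow n
  have cont : Continuous (fun x => |Real.cos x ^ n - Real.cos ((k:ℝ)*x) ^ n| - gfun n x) :=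
    (((Real.continuous_cos.pow n).sub cF).abs).sub (g_cont n)
  have hint : ∀ (a b : ℝ), IntervalIntegrable
      (fun x => |Real.cos x ^ n - Real.cos ((k:ℝ)*x) ^ n| - gfun n x) volume a b :=
    fun a b => cont.intervalIntegrable a b
  have hsum := intervalIntegral.sum_integral_adjacent_intervals
    (a := ai) (n := m) (fun i _ => hint _ _)
  have hsplit := intervalIntegral.integral_add_adjacent_intervals
    (a := ai 0) (b := ai m) (c := π) (hint _ _) (hint _ _)
  have ha0 : ai 0 = 0 := by rw [hai]; simp
  -- facts about ai m
  have h2m : 2*(m:ℝ) ≤ (k:ℝ) := by exact_mod_cast (by omega : 2*m ≤ k)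
  have h2m' : (k:ℝ) ≤ 2*(m:ℝ)+1 := by exact_mod_cast (by omega : k ≤ 2*m+1)
  have hamk : ai m * k = 2*π*m := by rw [hai]; field_simp
  have ham1 : ai m ≤ π := by nlinarith
  have ham2 : π - ai m ≤ π/k := by
    rw [div_eq_mul_inv]
    nlinarith [mul_pos hπ (inv_pos.2 hk0), inv_mul_cancel₀ (ne_of_gt hk0)]
  have hamnn : 0 ≤ π - ai m := by nlinarith
  -- bound each pair
  have hpair : ∀ i : ℕ, |∫ x in (ai i)..(ai (i+1)),
      (|Real.cos x ^ n - Real.cos ((k:ℝ)*x) ^ n| - gfun n x)| ≤ 8*π^2*n/k^2 := by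
    intro i
    rw [hstep i]
    exact pair_bound n k hk (ai i)
  -- bound the sum part
  have hsumb : |∫ x in (ai 0)..(ai m),
      (|Real.cos x ^ n - Real.cos ((k:ℝ)*x) ^ n| - gfun n x)| ≤ (m:ℝ) * (8*π^2*n/k^2) := by
    rw [← hsum]
    refine le_trans (Finset.abs_sum_le_sum_abs _ _) ?_
    refine le_trans (Finset.sum_le_sum fun i _ => hpair i) ?_
    rw [Finset.sum_const, Finset.card_range, nsmul_eq_mul]
  -- bound the tail
  have htail : |∫ x in (ai m)..π,
      (|Real.cos x ^ n - Real.cos ((k:ℝ)*x) ^ n| - gfun n x)| ≤ 4 * (π/k) := by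
    have hb : ∀ x ∈ Set.uIoc (ai m) π,
        ‖|Real.cos x ^ n - Real.cos ((k:ℝ)*x) ^ n| - gfun n x‖ ≤ 4 := by
      intro x _
      rw [Real.norm_eq_abs]
      have h1 := F_bd n x ((k:ℝ)*x)
      have h2 := g_bd n x
      have h3 := abs_sub (|Real.cos x ^ n - Real.cos ((k:ℝ)*x) ^ n|) (gfun n x)
      rw [abs_abs] at h3
      linarith
    have key := intervalIntegral.norm_integral_le_of_norm_le_const hb
    rw [Real.norm_eq_abs] at key
    refine key.trans ?_
    rw [abs_of_nonneg (by linarith : (0:ℝ) ≤ π - ai m)]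
    nlinarith
  have hmb : (m:ℝ) * (8*π^2*n/k^2) ≤ 4*π^2*n/k := by
    calc (m:ℝ) * (8*π^2*n/k^2) = 2*(m:ℝ) * (4*π^2*(n:ℝ)/k^2) := by ring
      _ ≤ (k:ℝ) * (4*π^2*(n:ℝ)/k^2) := by gcongr
      _ = 4*π^2*n/k := by field_simp
  calc |∫ x in (0:ℝ)..π, (|Real.cos x ^ n - Real.cos ((k:ℝ)*x) ^ n| - gfun n x)|
      = |(∫ x in (ai 0)..(ai m), (|Real.cos x ^ n - Real.cos ((k:ℝ)*x) ^ n| - gfun n x))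
        + ∫ x in (ai m)..π, (|Real.cos x ^ n - Real.cos ((k:ℝ)*x) ^ n| - gfun n x)| := by
        rw [hsplit, ha0]
    _ ≤ (m:ℝ) * (8*π^2*n/k^2) + 4 * (π/k) := le_trans (abs_add_le _ _) (add_le_add hsumb htail)
    _ ≤ 4*π^2*n/k + 4 * (π/k) := by linarith
    _ = (4*π^2*n + 4*π)/k := by field_simp

lemma tendsto_main (n : ℕ) :
    Tendsto (fun k : ℕ => ∫ x in (0:ℝ)..π, |Real.cos x ^ n - Real.cos ((k:ℝ)*x) ^ n|) atTop
      (𝓝 (∫ x in (0:ℝ)..π, gfun n x)) := by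
  have hdiff : Tendsto (fun k : ℕ => ∫ x in (0:ℝ)..π,
      (|Real.cos x ^ n - Real.cos ((k:ℝ)*x) ^ n| - gfun n x)) atTop (𝓝 0) := by
    refine squeeze_zero_norm' ?_ (tendsto_const_div_atTop_nhds_zero_nat (4*π^2*n + 4*π))
    filter_upwards [eventually_ge_atTop 1] with k hk
    rw [Real.norm_eq_abs]
    exact main_bound n k hk
  have heq : ∀ k : ℕ, (∫ x in (0:ℝ)..π, |Real.cos x ^ n - Real.cos ((k:ℝ)*x) ^ n|)
      = (∫ x in (0:ℝ)..π, (|Real.cos x ^ n - Real.cos ((k:ℝ)*x) ^ n| - gfun n x))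
        + ∫ x in (0:ℝ)..π, gfun n x := by
    intro k
    have cF : Continuous fun x : ℝ => Real.cos ((k:ℝ)*x) ^ n :=
      (Real.continuous_cos.comp (continuous_const.mul continuous_id)).pow n
    rw [intervalIntegral.integral_sub (f := fun x => |Real.cos x ^ n - Real.cos ((k:ℝ)*x) ^ n|)
      (g := gfun n)
      ((((Real.continuous_cos.pow n).sub cF).abs).intervalIntegrable _ _)
      ((g_cont n).intervalIntegrable _ _)]
    ring
  simp only [heq]
  have := hdiff.add (tendsto_const_nhds
    (x := ∫ x in (0:ℝ)..π, gfun n x) (f := atTop (α := ℕ)))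
  simpa using this
open Real Filter MeasureTheory Topology intervalIntegral

noncomputable def Cfun (n : ℕ) (x : ℝ) : ℝ := ∫ t in (0:ℝ)..x, Real.cos t ^ n

lemma C_deriv (n : ℕ) (x : ℝ) : HasDerivAt (Cfun n) (Real.cos x ^ n) x :=
  ((Real.continuous_cos.pow n).integral_hasStrictDerivAt 0 x).hasDerivAt

lemma C_cont (n : ℕ) : Continuous (Cfun n) :=
  continuous_iff_continuousAt.2 fun x => (C_deriv n x).continuousAt

lemma C_pi (n : ℕ) (hn : Odd n) : Cfun n π = 0 := by
  have h := intervalIntegral.integral_comp_sub_left (a := (0:ℝ)) (b := π)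
    (fun t => Real.cos t ^ n) π
  have e : ∀ y : ℝ, Real.cos (π - y) ^ n = -(Real.cos y ^ n) := by
    intro y; rw [Real.cos_pi_sub, hn.neg_pow]
  simp only [e] at h
  rw [sub_self, sub_zero, intervalIntegral.integral_neg] at h
  have : Cfun n π = ∫ t in (0:ℝ)..π, Real.cos t ^ n := rfl
  rw [this]
  linarith [h]

lemma g_val (n : ℕ) (hn : Odd n) (x : ℝ) (hx : x ∈ Set.Icc (0:ℝ) π) :
    gfun n x = π⁻¹ * (2 * Cfun n x + (π - 2*x) * Real.cos x ^ n) := by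
  have hπ := Real.pi_pos
  obtain ⟨hx0, hxπ⟩ := hx
  set c : ℝ := Real.cos x ^ n with hc
  have hsplit := intervalIntegral.integral_add_adjacent_intervals
    (integrable_absdiff n c 0 x) (integrable_absdiff n c x π)
  have hsplit2 := intervalIntegral.integral_add_adjacent_intervals
    (μ := volume) (a := (0:ℝ)) (b := x) (c := π)
    ((Real.continuous_cos.pow n).intervalIntegrable _ _)
    ((Real.continuous_cos.pow n).intervalIntegrable _ _)
  have hI1 : (∫ y in (0:ℝ)..x, |c - Real.cos y ^ n|) = Cfun n x - x * c := by
    have hcg : (∫ y in (0:ℝ)..x, |c - Real.cos y ^ n|)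
        = ∫ y in (0:ℝ)..x, (Real.cos y ^ n - c) := by
      refine intervalIntegral.integral_congr fun y hy => ?_
      rw [Set.uIcc_of_le hx0] at hy
      have hcy : Real.cos x ≤ Real.cos y :=
        Real.cos_le_cos_of_nonneg_of_le_pi hy.1 hxπ hy.2
      have hpow : c ≤ Real.cos y ^ n := hn.strictMono_pow.monotone hcy
      rw [abs_of_nonpos (by linarith)]
      ring
    rw [hcg, intervalIntegral.integral_sub (f := fun y => Real.cos y ^ n) (g := fun _ => c)
      ((Real.continuous_cos.pow n).intervalIntegrable _ _) intervalIntegrable_const,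
      intervalIntegral.integral_const, smul_eq_mul, sub_zero]
    rfl
  have hI2 : (∫ y in x..π, |c - Real.cos y ^ n|) = (π - x) * c + Cfun n x := by
    have hcg : (∫ y in x..π, |c - Real.cos y ^ n|) = ∫ y in x..π, (c - Real.cos y ^ n) := by
      refine intervalIntegral.integral_congr fun y hy => ?_
      rw [Set.uIcc_of_le hxπ] at hy
      have hcy : Real.cos y ≤ Real.cos x :=
        Real.cos_le_cos_of_nonneg_of_le_pi hx0 hy.2 hy.1
      have hpow : Real.cos y ^ n ≤ c := hn.strictMono_pow.monotone hcy
      rw [abs_of_nonneg (by linarith)]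
    have hxint : (∫ y in x..π, Real.cos y ^ n) = - Cfun n x := by
      have h0 : Cfun n x + (∫ y in x..π, Real.cos y ^ n) = Cfun n π := hsplit2
      rw [C_pi n hn] at h0
      linarith
    rw [hcg, intervalIntegral.integral_sub (f := fun _ => c) (g := fun y => Real.cos y ^ n)
        intervalIntegrable_const
      ((Real.continuous_cos.pow n).intervalIntegrable _ _),
      intervalIntegral.integral_const, smul_eq_mul, hxint]
    ring
  rw [gfun, ← hc, ← hsplit, hI1, hI2]
  ring

lemma int_C (n m : ℕ) (hn : n = 2*m+1) : (∫ x in (0:ℝ)..π, Cfun n x) = - Jint m := by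
  have hodd : Odd n := ⟨m, by omega⟩
  have h : ∀ x ∈ Set.uIcc (0:ℝ) π, HasDerivAt (fun x => x * Cfun n x)
      (Cfun n x + x * Real.cos x ^ n) x := by
    intro x _
    have := (hasDerivAt_id x).mul (C_deriv n x)
    exact this.congr_deriv (by simp only [id_eq]; ring)
  have hint : IntervalIntegrable (fun x => Cfun n x + x * Real.cos x ^ n) volume 0 π :=
    ((C_cont n).add (continuous_id.mul (Real.continuous_cos.pow n))).intervalIntegrable _ _
  have key := integral_eq_sub_of_hasDerivAt h hint
  rw [C_pi n hodd] at key
  have ia : IntervalIntegrable (fun x : ℝ => x * Real.cos x ^ n) volume 0 π := by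
    exact (continuous_id.mul (Real.continuous_cos.pow n)).intervalIntegrable _ _
  rw [intervalIntegral.integral_add ((C_cont n).intervalIntegrable _ _) ia] at key
  have : (∫ x in (0:ℝ)..π, x * Real.cos x ^ n) = Jint m := by rw [Jint, hn]
  rw [this] at key
  simp at key
  linarith

lemma int_g (n m : ℕ) (hn : n = 2*m+1) :
    (∫ x in (0:ℝ)..π, gfun n x) = -(4/π) * Jint m := by
  have hπ := Real.pi_pos
  have hodd : Odd n := ⟨m, by omega⟩
  have hcg : (∫ x in (0:ℝ)..π, gfun n x)
      = ∫ x in (0:ℝ)..π, π⁻¹ * (2 * Cfun n x + (π - 2*x) * Real.cos x ^ n) := by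
    refine intervalIntegral.integral_congr fun x hx => ?_
    rw [Set.uIcc_of_le hπ.le] at hx
    exact g_val n hodd x hx
  rw [hcg, intervalIntegral.integral_const_mul]
  have i1 : IntervalIntegrable (fun x => 2 * Cfun n x) volume 0 π :=
    (continuous_const.mul (C_cont n)).intervalIntegrable _ _
  have i2 : IntervalIntegrable (fun x => (π - 2*x) * Real.cos x ^ n) volume 0 π :=
    (((continuous_const.sub (continuous_const.mul continuous_id))).mul
      (Real.continuous_cos.pow n)).intervalIntegrable _ _
  rw [intervalIntegral.integral_add i1 i2, intervalIntegral.integral_const_mul, int_C n m hn]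
  have h2 : (∫ x in (0:ℝ)..π, (π - 2*x) * Real.cos x ^ n) = -2 * Jint m := by
    have e : ∀ x : ℝ, (π - 2*x) * Real.cos x ^ n
        = π * Real.cos x ^ n - 2 * (x * Real.cos x ^ n) := by intro x; ring
    simp only [e]
    have ib : IntervalIntegrable (fun x : ℝ => π * Real.cos x ^ n) volume 0 π := by
      exact (continuous_const.mul (Real.continuous_cos.pow n)).intervalIntegrable _ _
    have ic : IntervalIntegrable (fun x : ℝ => 2 * (x * Real.cos x ^ n)) volume 0 π := by
      exact (continuous_const.mul (continuous_id.mul (Real.continuous_cos.pow n))).intervalIntegrable _ _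
    rw [intervalIntegral.integral_sub ib ic,
      intervalIntegral.integral_const_mul, intervalIntegral.integral_const_mul]
    have hc0 : (∫ x in (0:ℝ)..π, Real.cos x ^ n) = 0 := C_pi n hodd
    have hj : (∫ x in (0:ℝ)..π, x * Real.cos x ^ n) = Jint m := by rw [Jint, hn]
    rw [hc0, hj]
    ring
  rw [h2]
  field_simp
  ring

lemma J_eq (m : ℕ) : Jint m = -2 * Tsum m := by
  induction m with
  | zero => rw [J_zero, T_zero]; ring
  | succ p ih => rw [J_rec, T_rec, ih]; ring

theorem area_odd_power_doubleFactorial (n : ℕ) (hn : Odd n) (hpos : 0 < n) :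
    Tendsto (fun k : ℕ => ∫ x in (0:ℝ)..π, |Real.cos x ^ n - Real.cos (k * x) ^ n|)
      atTop
      (𝓝 (8 / π * ((n.factorial : ℝ) / (Nat.doubleFactorial n : ℝ) ^ 2) *
        ∑ j ∈ Finset.range ((n - 1) / 2 + 1),
          (Nat.doubleFactorial (2 * j - 1) : ℝ) / (Nat.doubleFactorial (2 * j) : ℝ) *
            (1 / (2 * (j : ℝ) + 1)))) := by
  obtain ⟨m, hm⟩ := hn
  have hm' : n = 2*m+1 := by omega
  have h1 := tendsto_main n
  rw [int_g n m hm'] at h1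
  have h2 : -(4/π) * Jint m = 8 / π * ((n.factorial : ℝ) / (Nat.doubleFactorial n : ℝ) ^ 2) *
      ∑ j ∈ Finset.range ((n - 1) / 2 + 1),
        (Nat.doubleFactorial (2 * j - 1) : ℝ) / (Nat.doubleFactorial (2 * j) : ℝ) *
          (1 / (2 * (j : ℝ) + 1)) := by
    rw [J_eq m, Tsum, hm', show (2*m+1-1)/2 = m from by omega]
    ring
  rw [h2] at h1
  exact h1
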